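/- Let n ≥ 1 and let Ω ⊆ ℝⁿ be a compact set whose topological boundary has Lebesgue measure zero. Then the number of integer lattice points in the dilation rΩ satisfies lim_{r→∞} #(ℤⁿ ∩ rΩ) / rⁿ = m(Ω), where m is Lebesgue measure on ℝⁿ. -/

import Mathlib

open MeasureTheory Metric Filter Topology Pointwise
open scoped ENNReal NNReal

/-- The number of points of a set, as a real number (finite sets in view). -/
noncomputable def cnt {α : Type*} (S : Set α) : ℝ := Nat.card S

/-- The integer lattice points in `ℝⁿ`. -/
def latticePts (n : ℕ) : Set (EuclideanSpace ℝ (Fin n)) :=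
  {x | ∀ i, ∃ k : ℤ, x i = (k : ℝ)}

namespace LatticeAux

variable {n : ℕ}

/-- Embedding of integer vectors into Euclidean space. -/
def vec (k : Fin n → ℤ) : EuclideanSpace ℝ (Fin n) := WithLp.toLp 2 (fun i => (k i : ℝ))

lemma vec_injective : Function.Injective (vec (n := n)) := by
  intro k l h
  funext i
  have : ((k i : ℝ)) = (l i : ℝ) := congrFun (congrArg WithLp.ofLp h) i
  exact_mod_cast this

lemma mem_latticePts {x : EuclideanSpace ℝ (Fin n)} :
    x ∈ latticePts n ↔ ∃ k, vec k = x := by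
  constructor
  · intro h
    choose k hk using h
    exact ⟨k, by ext i; exact (hk i).symm⟩
  · rintro ⟨k, rfl⟩ i; exact ⟨k i, rfl⟩

/-- The half-open unit cube with corner `k`. -/
def cube (k : Fin n → ℤ) : Set (EuclideanSpace ℝ (Fin n)) :=
  {y | ∀ i, y i ∈ Set.Ico (k i : ℝ) ((k i : ℝ) + 1)}

lemma cube_eq_preimage (k : Fin n → ℤ) :
    cube k = ((MeasurableEquiv.toLp 2 (Fin n → ℝ)).symm) ⁻¹'
      (Set.univ.pi fun i => Set.Ico (k i : ℝ) ((k i : ℝ) + 1)) := by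
  ext y
  simp [cube, Set.mem_pi, MeasurableEquiv.coe_toLp_symm]

lemma volume_cube (k : Fin n → ℤ) : volume (cube k) = 1 := by
  rw [cube_eq_preimage,
    (EuclideanSpace.volume_preserving_symm_measurableEquiv_toLp (Fin n)).measure_preimage
      ((MeasurableSet.univ_pi fun i => measurableSet_Ico).nullMeasurableSet)]
  rw [volume_pi_pi]
  simp

lemma measurableSet_cube (k : Fin n → ℤ) : MeasurableSet (cube k) := by
  rw [cube_eq_preimage]
  exact ((MeasurableEquiv.toLp 2 (Fin n → ℝ)).symm).measurable
    (MeasurableSet.univ_pi fun i => measurableSet_Ico)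

lemma cube_disjoint : Pairwise (Function.onFun Disjoint (cube (n := n))) := by
  intro k l hkl
  rw [Function.onFun, Set.disjoint_left]
  intro y hy hy'
  apply hkl
  funext i
  have h1 := hy i
  have h2 := hy' i
  have e1 : ⌊y i⌋ = k i := by
    rw [Int.floor_eq_iff]; exact_mod_cast h1
  have e2 : ⌊y i⌋ = l i := by
    rw [Int.floor_eq_iff]; exact_mod_cast h2
  rw [← e1, e2]

lemma mem_cube_floor (x : EuclideanSpace ℝ (Fin n)) :
    x ∈ cube (fun i => ⌊x i⌋) := fun i => ⟨Int.floor_le _, Int.lt_floor_add_one _⟩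

lemma dist_le_sqrt {x y : EuclideanSpace ℝ (Fin n)} (h : ∀ i, |x i - y i| ≤ 1) :
    dist x y ≤ Real.sqrt n := by
  rw [EuclideanSpace.dist_eq]
  apply Real.sqrt_le_sqrt
  calc ∑ i, dist (x i) (y i) ^ 2 ≤ ∑ _i : Fin n, 1 := by
        refine Finset.sum_le_sum fun i _ => ?_
        rw [Real.dist_eq]
        exact pow_le_one₀ (abs_nonneg _) (h i)
    _ = n := by simp

lemma abs_coord_le_norm (x : EuclideanSpace ℝ (Fin n)) (i : Fin n) : |x i| ≤ ‖x‖ := by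
  rw [EuclideanSpace.norm_eq, ← Real.sqrt_sq_eq_abs]
  apply Real.sqrt_le_sqrt
  have : ‖x i‖ ^ 2 = x i ^ 2 := by rw [Real.norm_eq_abs, sq_abs]
  rw [← this]
  exact Finset.single_le_sum (f := fun j => ‖x j‖ ^ 2) (fun j _ => sq_nonneg _)
    (Finset.mem_univ i)

lemma preconnected_subset {X : Type*} [TopologicalSpace X] {s t : Set X}
    (ht : IsPreconnected t) (hdisj : Disjoint t (frontier s)) {x : X}
    (hxt : x ∈ t) (hxs : x ∈ s) : t ⊆ s := by
  have hcover : t ⊆ interior s ∪ (closure s)ᶜ := by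
    intro y hy
    by_cases h : y ∈ closure s
    · left
      rcases (Classical.em (y ∈ interior s)) with h' | h'
      · exact h'
      · exact absurd ⟨h, h'⟩ (Set.disjoint_left.mp hdisj hy)
    · right; exact h
  have hsub : t ⊆ interior s :=
    ht.subset_left_of_subset_union isOpen_interior (isClosed_closure.isOpen_compl)
      (disjoint_compl_right.mono_left interior_subset_closure) hcover
      ⟨x, hxt, by
        rcases Classical.em (x ∈ interior s) with h' | h'
        · exact h'
        · exact absurd ⟨subset_closure hxs, h'⟩ (Set.disjoint_left.mp hdisj hxt)⟩
  exact hsub.trans interior_subset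

lemma cthickening_smul {r : ℝ} (hr : 0 < r) (δ : ℝ)
    (s : Set (EuclideanSpace ℝ (Fin n))) :
    cthickening δ (r • s) = r • cthickening (δ / r) s := by
  ext x
  have hrn : (‖r‖₊ : ℝ≥0∞) = ENNReal.ofReal r := by
    rw [← Real.enorm_eq_ofReal hr.le, enorm_eq_nnnorm]
  constructor
  · intro hx
    rw [Metric.mem_cthickening_iff] at hx
    refine Set.mem_smul_set.mpr ⟨r⁻¹ • x, ?_, smul_inv_smul₀ hr.ne' x⟩
    rw [Metric.mem_cthickening_iff]
    have hx' : infEDist (r • (r⁻¹ • x)) (r • s) ≤ ENNReal.ofReal δ := by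
      rwa [smul_inv_smul₀ hr.ne']
    rw [infEdist_smul₀ hr.ne', ENNReal.smul_def, smul_eq_mul, hrn] at hx'
    rw [ENNReal.ofReal_div_of_pos hr]
    rw [ENNReal.le_div_iff_mul_le (Or.inl (by simp [hr])) (Or.inl ENNReal.ofReal_ne_top)]
    rwa [mul_comm]
  · intro hx
    obtain ⟨z, hz, rfl⟩ := Set.mem_smul_set.mp hx
    rw [Metric.mem_cthickening_iff] at hz ⊢
    rw [infEdist_smul₀ hr.ne', ENNReal.smul_def, smul_eq_mul, hrn]
    calc ENNReal.ofReal r * infEDist z s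
        ≤ ENNReal.ofReal r * ENNReal.ofReal (δ / r) := by gcongr
      _ = ENNReal.ofReal δ := by
          rw [← ENNReal.ofReal_mul hr.le]
          congr 1
          field_simp

lemma main_bounds {Ω : Set (EuclideanSpace ℝ (Fin n))} (hΩc : IsCompact Ω)
    {r : ℝ} (hr : 1 ≤ r) :
    (volume Ω).toReal - (volume (cthickening (Real.sqrt n / r) (frontier Ω))).toReal
        ≤ cnt (latticePts n ∩ r • Ω) / r ^ n ∧
      cnt (latticePts n ∩ r • Ω) / r ^ n
        ≤ (volume (cthickening (Real.sqrt n / r) Ω)).toReal := by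
  classical
  have hr0 : (0 : ℝ) < r := lt_of_lt_of_le one_pos hr
  set c : ℝ := Real.sqrt n with hcdef
  have hc0 : 0 ≤ c := Real.sqrt_nonneg _
  set A := r • Ω with hAdef
  have hAc : IsCompact A := by
    rw [hAdef, ← Set.image_smul]
    exact hΩc.image (continuous_const_smul r)
  -- the set of lattice vectors in `A`
  set T : Set (Fin n → ℤ) := vec ⁻¹' A with hTdef
  have hTfin : T.Finite := by
    obtain ⟨R, hR⟩ := hAc.isBounded.subset_closedBall 0
    apply Set.Finite.subset (Set.Finite.pi fun _ : Fin n => Set.finite_Icc (-(⌈R⌉)) ⌈R⌉)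
    intro k hk
    rw [Set.mem_univ_pi]
    intro i
    have h1 : ‖vec k‖ ≤ R := by
      have := hR hk
      rwa [mem_closedBall, dist_zero_right] at this
    have h2 : |(k i : ℝ)| ≤ R := le_trans (abs_coord_le_norm (vec k) i) h1
    have hRceil : R ≤ (⌈R⌉ : ℝ) := Int.le_ceil R
    constructor
    · have : -(⌈R⌉ : ℝ) ≤ (k i : ℝ) := by
        have := neg_le_of_abs_le h2
        linarith
      exact_mod_cast this
    · have : (k i : ℝ) ≤ (⌈R⌉ : ℝ) := le_trans (le_trans (le_abs_self _) h2) hRceil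
      exact_mod_cast this
  have hScard : cnt (latticePts n ∩ A) = (Nat.card T : ℝ) := by
    have himg : latticePts n ∩ A = vec '' T := by
      ext x
      constructor
      · rintro ⟨hx1, hx2⟩
        obtain ⟨k, rfl⟩ := mem_latticePts.mp hx1
        exact ⟨k, hx2, rfl⟩
      · rintro ⟨k, hk, rfl⟩
        exact ⟨mem_latticePts.mpr ⟨k, rfl⟩, hk⟩
    rw [cnt, himg, Nat.card_image_of_injective vec_injective]
  set F := hTfin.toFinset with hFdef
  have hcardF : (F.card : ℕ) = Nat.card T := by
    rw [Nat.card_coe_set_eq, Set.ncard_eq_toFinset_card T hTfin]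
  set U := ⋃ k ∈ F, cube k with hUdef
  have hUvol : volume U = (Nat.card T : ℝ≥0∞) := by
    rw [hUdef, measure_biUnion_finset (cube_disjoint.set_pairwise _)
      (fun k _ => measurableSet_cube k)]
    simp only [volume_cube, Finset.sum_const, nsmul_eq_mul, mul_one]
    rw [← hcardF]
  have hUsub : U ⊆ cthickening c A := by
    intro y hy
    rw [hUdef, Set.mem_iUnion₂] at hy
    obtain ⟨k, hkF, hky⟩ := hy
    have hkT : vec k ∈ A := hTfin.mem_toFinset.mp hkF
    apply mem_cthickening_of_dist_le y (vec k) c A hkT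
    apply dist_le_sqrt
    intro i
    have h1 := (hky i).1
    have h2 := (hky i).2
    have hv : vec k i = (k i : ℝ) := rfl
    rw [abs_le, hv]
    constructor <;> linarith
  have hlow : A \ cthickening c (frontier A) ⊆ U := by
    rintro x ⟨hxA, hxth⟩
    set k : Fin n → ℤ := fun i => ⌊x i⌋ with hkdef
    have hxcube : x ∈ cube k := mem_cube_floor x
    have hdistk : dist (vec k) x ≤ c := by
      apply dist_le_sqrt
      intro i
      have hv : vec k i = ((⌊x i⌋ : ℤ) : ℝ) := rfl
      have h1 : ((⌊x i⌋ : ℤ) : ℝ) ≤ x i := Int.floor_le _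
      have h2 : x i < (⌊x i⌋ : ℤ) + 1 := Int.lt_floor_add_one _
      rw [abs_le, hv]
      constructor <;> linarith
    have hball : Disjoint (closedBall x c) (frontier A) := by
      rw [Set.disjoint_left]
      intro z hz hzf
      exact hxth (mem_cthickening_of_dist_le x z c _ hzf (by rw [mem_closedBall] at hz; rwa [dist_comm]))
    have hsub : closedBall x c ⊆ A :=
      preconnected_subset (convex_closedBall x c).isPreconnected hball
        (mem_closedBall_self hc0) hxA
    have hkF : k ∈ F := hTfin.mem_toFinset.mpr (hsub (by rwa [mem_closedBall]))
    exact Set.mem_biUnion hkF hxcube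
  -- scaling facts
  have hfr : frontier A = r • frontier Ω := by
    have hinj : Function.Injective (fun x : EuclideanSpace ℝ (Fin n) => r • x) :=
      MulAction.injective₀ hr0.ne'
    rw [hAdef, frontier, frontier, closure_smul₀, interior_smul₀ hr0.ne',
      ← Set.image_smul, ← Set.image_smul, ← Set.image_smul, ← Set.image_diff hinj]
  have hthickA : cthickening c A = r • cthickening (c / r) Ω := by
    rw [hAdef, cthickening_smul hr0]
  have hthickF : cthickening c (frontier A) = r • cthickening (c / r) (frontier Ω) := by
    rw [hfr, cthickening_smul hr0]
  have hsmulvol : ∀ s : Set (EuclideanSpace ℝ (Fin n)),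
      volume (r • s) = ENNReal.ofReal (r ^ n) * volume s := by
    intro s
    rw [Measure.addHaar_smul_of_nonneg volume hr0.le, finrank_euclideanSpace_fin]
  have hrn : (0 : ℝ) < r ^ n := pow_pos hr0 n
  have hΩfin : volume Ω ≠ ⊤ := hΩc.isBounded.measure_lt_top.ne
  have hthfin : volume (cthickening (c / r) Ω) ≠ ⊤ :=
    hΩc.isBounded.cthickening.measure_lt_top.ne
  have hfrbd : Bornology.IsBounded (frontier Ω) :=
    hΩc.isBounded.subset (frontier_subset_closure.trans hΩc.isClosed.closure_eq.subset)
  have hfrfin : volume (cthickening (c / r) (frontier Ω)) ≠ ⊤ :=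
    hfrbd.cthickening.measure_lt_top.ne
  rw [hScard]
  constructor
  · -- lower bound
    have key : volume A ≤ (Nat.card T : ℝ≥0∞) + volume (cthickening c (frontier A)) := by
      calc volume A ≤ volume (U ∪ cthickening c (frontier A)) := by
            apply measure_mono
            intro x hx
            by_cases hxc : x ∈ cthickening c (frontier A)
            · exact Or.inr hxc
            · exact Or.inl (hlow ⟨hx, hxc⟩)
        _ ≤ volume U + volume (cthickening c (frontier A)) := measure_union_le _ _
        _ = _ := by rw [hUvol]
    rw [hAdef, hsmulvol, hthickF, hsmulvol] at key
    have hRHSfin : (Nat.card T : ℝ≥0∞) +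
        ENNReal.ofReal (r ^ n) * volume (cthickening (c / r) (frontier Ω)) ≠ ⊤ := by
      apply ENNReal.add_ne_top.mpr
      exact ⟨ENNReal.natCast_ne_top _, ENNReal.mul_ne_top ENNReal.ofReal_ne_top hfrfin⟩
    have key' := ENNReal.toReal_mono hRHSfin key
    rw [ENNReal.toReal_mul, ENNReal.toReal_ofReal hrn.le,
      ENNReal.toReal_add (ENNReal.natCast_ne_top _)
        (ENNReal.mul_ne_top ENNReal.ofReal_ne_top hfrfin),
      ENNReal.toReal_mul, ENNReal.toReal_ofReal hrn.le, ENNReal.toReal_natCast] at key'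
    rw [le_div_iff₀ hrn]
    nlinarith [key']
  · -- upper bound
    have key : (Nat.card T : ℝ≥0∞) ≤ volume (cthickening c A) := by
      rw [← hUvol]; exact measure_mono hUsub
    rw [hthickA, hsmulvol] at key
    have key' := ENNReal.toReal_mono (ENNReal.mul_ne_top ENNReal.ofReal_ne_top hthfin) key
    rw [ENNReal.toReal_natCast, ENNReal.toReal_mul, ENNReal.toReal_ofReal hrn.le] at key'
    rw [div_le_iff₀ hrn]
    linarith [key']

end LatticeAux

theorem lattice_point_count
    {n : ℕ} (hn : 1 ≤ n) (Ω : Set (EuclideanSpace ℝ (Fin n)))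
    (hΩc : IsCompact Ω) (hbd : volume (frontier Ω) = 0) :
    Tendsto (fun r : ℝ => cnt (latticePts n ∩ r • Ω) / r ^ n) atTop
      (𝓝 (volume Ω).toReal) := by
  have hΩfin : volume Ω ≠ ⊤ := hΩc.isBounded.measure_lt_top.ne
  have hfrbd : Bornology.IsBounded (frontier Ω) :=
    hΩc.isBounded.subset (frontier_subset_closure.trans hΩc.isClosed.closure_eq.subset)
  have hδ : Tendsto (fun r : ℝ => Real.sqrt n / r) atTop (𝓝 0) :=
    tendsto_const_nhds.div_atTop tendsto_id
  have hg : Tendsto (fun r : ℝ => (volume (cthickening (Real.sqrt n / r) Ω)).toReal)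
      atTop (𝓝 (volume Ω).toReal) := by
    have h1 : Tendsto (fun δ : ℝ => volume (cthickening δ Ω)) (𝓝 0) (𝓝 (volume Ω)) := by
      have := tendsto_measure_cthickening (μ := volume) (s := Ω)
        ⟨1, one_pos, hΩc.isBounded.cthickening.measure_lt_top.ne⟩
      rwa [hΩc.isClosed.closure_eq] at this
    exact ((ENNReal.tendsto_toReal hΩfin).comp h1).comp hδ
  have hh : Tendsto (fun r : ℝ =>
      (volume Ω).toReal - (volume (cthickening (Real.sqrt n / r) (frontier Ω))).toReal)
      atTop (𝓝 (volume Ω).toReal) := by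
    have h1 : Tendsto (fun δ : ℝ => volume (cthickening δ (frontier Ω))) (𝓝 0) (𝓝 0) := by
      have := tendsto_measure_cthickening (μ := volume) (s := frontier Ω)
        ⟨1, one_pos, hfrbd.cthickening.measure_lt_top.ne⟩
      rwa [isClosed_frontier.closure_eq, hbd] at this
    have h2 : Tendsto (fun r : ℝ =>
        (volume (cthickening (Real.sqrt n / r) (frontier Ω))).toReal) atTop (𝓝 0) := by
      have := ((ENNReal.tendsto_toReal (by simp)).comp h1).comp hδ
      exact this
    simpa using tendsto_const_nhds.sub h2
  refine tendsto_of_tendsto_of_tendsto_of_le_of_le' hh hg ?_ ?_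
  · filter_upwards [eventually_ge_atTop (1 : ℝ)] with r hr
    exact (LatticeAux.main_bounds hΩc hr).1
  · filter_upwards [eventually_ge_atTop (1 : ℝ)] with r hr
    exact (LatticeAux.main_bounds hΩc hr).2
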